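/- Under the hypotheses identifying E[Y¹|S=1] with γ_{1,1} (consistency, trial exchangeability and positivity for a=1) and E[Y²|S=1] with ρ (the relative-measure transport functional), the average treatment effect E[Y¹ − Y² | S=1] equals θ := γ_{1,1} − ρ, i.e., Σ_x [E[Y|X=x,S=1,A=1] − E[Y|X=x,S=1,A=0]·E[Y|X=x,S=0,A=2]/E[Y|X=x,S=0,A=0]] · P(X=x|S=1). -/
import Mathlib


open Finset
open scoped Classical

noncomputable def pr {Ω : Type*} [Fintype Ω] (P : Ω → ℝ) (E : Ω → Prop) : ℝ :=
  ∑ ω, if E ω then P ω else 0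

noncomputable def cexp {Ω : Type*} [Fintype Ω] (P : Ω → ℝ) (Y : Ω → ℝ) (E : Ω → Prop) : ℝ :=
  (∑ ω, if E ω then Y ω * P ω else 0) / pr P E

noncomputable def cpr {Ω : Type*} [Fintype Ω] (P : Ω → ℝ) (E F : Ω → Prop) : ℝ :=
  pr P (fun ω => E ω ∧ F ω) / pr P F


section Helpers
variable {Ω 𝓧 : Type*} [Fintype Ω] [Fintype 𝓧]

lemma pr_nonneg' (P : Ω → ℝ) (hP : ∀ ω, 0 ≤ P ω) (E : Ω → Prop) : 0 ≤ pr P E := by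
  apply Finset.sum_nonneg
  intro ω _
  by_cases h : E ω <;> simp [h, hP ω]

lemma pr_congr' (P : Ω → ℝ) {E F : Ω → Prop} (h : ∀ ω, E ω ↔ F ω) : pr P E = pr P F := by
  unfold pr
  exact Finset.sum_congr rfl fun ω _ => by rw [show E ω ↔ F ω from h ω]

lemma zero_of_pr' (P : Ω → ℝ) (hP : ∀ ω, 0 ≤ P ω) {E : Ω → Prop} (h : pr P E = 0) :
    ∀ ω, E ω → P ω = 0 := by
  intro ω hω
  have h2 := (Finset.sum_eq_zero_iff_of_nonneg
    (fun ω _ => by by_cases hι : E ω <;> simp [hι, hP ω])).mp h ω (Finset.mem_univ ω)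
  simpa [hω] using h2

lemma cexp_congr' (P : Ω → ℝ) {Y Z : Ω → ℝ} {E : Ω → Prop} (h : ∀ ω, E ω → Y ω = Z ω) :
    cexp P Y E = cexp P Z E := by
  unfold cexp
  congr 1
  refine Finset.sum_congr rfl fun ω _ => ?_
  by_cases hω : E ω
  · simp [hω, h ω hω]
  · simp [hω]

lemma cexp_mul_pr' (P : Ω → ℝ) (hP : ∀ ω, 0 ≤ P ω) (Z : Ω → ℝ) (E : Ω → Prop) :
    cexp P Z E * pr P E = ∑ ω, if E ω then Z ω * P ω else 0 := by
  rcases eq_or_lt_of_le (pr_nonneg' P hP E) with h | h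
  · rw [← h, mul_zero]
    symm
    apply Finset.sum_eq_zero
    intro ω _
    by_cases hω : E ω
    · simp [hω, zero_of_pr' P hP h.symm ω hω]
    · simp [hω]
  · unfold cexp
    rw [div_mul_cancel₀ _ (ne_of_gt h)]

lemma pr_pos_of_cpr' (P : Ω → ℝ) (hP : ∀ ω, 0 ≤ P ω) {E F : Ω → Prop}
    (h : 0 < cpr P E F) : 0 < pr P (fun ω => E ω ∧ F ω) := by
  by_contra hc
  have h0 : pr P (fun ω => E ω ∧ F ω) = 0 :=
    le_antisymm (not_lt.mp hc) (pr_nonneg' P hP _)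
  rw [cpr, h0, zero_div] at h
  exact lt_irrefl 0 h

lemma cexp_sub' (P : Ω → ℝ) (Y Z : Ω → ℝ) (E : Ω → Prop) :
    cexp P (fun ω => Y ω - Z ω) E = cexp P Y E - cexp P Z E := by
  unfold cexp
  rw [div_sub_div_same, ← Finset.sum_sub_distrib]
  refine congrArg (· / pr P E) (Finset.sum_congr rfl fun ω _ => ?_)
  by_cases hω : E ω <;> simp [hω] <;> ring

lemma total' (P : Ω → ℝ) (hP : ∀ ω, 0 ≤ P ω) (X : Ω → 𝓧) (S : Ω → ℕ) (Z : Ω → ℝ) :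
    cexp P Z (fun ω => S ω = 1) =
      ∑ x : 𝓧, cexp P Z (fun ω => X ω = x ∧ S ω = 1) *
        (pr P (fun ω => X ω = x ∧ S ω = 1) / pr P (fun ω => S ω = 1)) := by
  have h1 : ∀ x : 𝓧, cexp P Z (fun ω => X ω = x ∧ S ω = 1) *
      (pr P (fun ω => X ω = x ∧ S ω = 1) / pr P (fun ω => S ω = 1)) =
      (∑ ω, if X ω = x ∧ S ω = 1 then Z ω * P ω else 0) / pr P (fun ω => S ω = 1) := by
    intro x
    rw [← mul_div_assoc, cexp_mul_pr' P hP Z (fun ω => X ω = x ∧ S ω = 1)]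
    congr
    funext ω
    congr

  simp_rw [h1]
  rw [← Finset.sum_div]
  unfold cexp
  congr 1
  rw [Finset.sum_comm]
  refine Finset.sum_congr rfl fun ω _ => ?_
  by_cases hs : S ω = 1
  · simp [hs]
  · simp [hs]

end Helpers

theorem stmt10    {Ω 𝓧 : Type*} [Fintype Ω] [Fintype 𝓧]
    (P : Ω → ℝ) (hP : ∀ ω, 0 ≤ P ω) (hPsum : ∑ ω, P ω = 1)
    (X : Ω → 𝓧) (S : Ω → ℕ) (A : Ω → ℕ) (Y : Ω → ℝ)
    (Y0 Y1 Y2 : Ω → ℝ)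
    (hS1 : 0 < pr P (fun ω => S ω = 1))
    (hcons0 : ∀ ω, A ω = 0 → Y0 ω = Y ω)
    (hcons2 : ∀ ω, A ω = 2 → Y2 ω = Y ω)
    (hcons1 : ∀ ω, A ω = 1 → Y1 ω = Y ω)
    (hexch0 : ∀ x, 0 < pr P (fun ω => X ω = x ∧ S ω = 1) → cexp P Y0 (fun ω => X ω = x ∧ S ω = 1) = cexp P Y0 (fun ω => X ω = x ∧ S ω = 1 ∧ A ω = 0))
    (hpos0 : ∀ x, 0 < pr P (fun ω => X ω = x ∧ S ω = 1) → 0 < cpr P (fun ω => A ω = 0) (fun ω => X ω = x ∧ S ω = 1))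
    (hexchext0 : ∀ x, 0 < pr P (fun ω => X ω = x ∧ S ω = 0) → cexp P Y0 (fun ω => X ω = x ∧ S ω = 0) = cexp P Y0 (fun ω => X ω = x ∧ S ω = 0 ∧ A ω = 0))
    (hexchext2 : ∀ x, 0 < pr P (fun ω => X ω = x ∧ S ω = 0) → cexp P Y2 (fun ω => X ω = x ∧ S ω = 0) = cexp P Y2 (fun ω => X ω = x ∧ S ω = 0 ∧ A ω = 2))
    (hposext0 : ∀ x, 0 < pr P (fun ω => X ω = x ∧ S ω = 0) → 0 < cpr P (fun ω => A ω = 0) (fun ω => X ω = x ∧ S ω = 0))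
    (hposext2 : ∀ x, 0 < pr P (fun ω => X ω = x ∧ S ω = 0) → 0 < cpr P (fun ω => A ω = 2) (fun ω => X ω = x ∧ S ω = 0))
    (hextpos : ∀ x, 0 < pr P (fun ω => X ω = x ∧ S ω = 1) → 0 < cpr P (fun ω => S ω = 0) (fun ω => X ω = x))
    (hexch1 : ∀ x, 0 < pr P (fun ω => X ω = x ∧ S ω = 1) → cexp P Y1 (fun ω => X ω = x ∧ S ω = 1) = cexp P Y1 (fun ω => X ω = x ∧ S ω = 1 ∧ A ω = 1))
    (hpos1 : ∀ x, 0 < pr P (fun ω => X ω = x ∧ S ω = 1) → 0 < cpr P (fun ω => A ω = 1) (fun ω => X ω = x ∧ S ω = 1))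
    (htransratio : ∀ x, 0 < pr P (fun ω => X ω = x ∧ S ω = 1) → 0 < pr P (fun ω => X ω = x ∧ S ω = 0) →
      cexp P Y2 (fun ω => X ω = x ∧ S ω = 1) / cexp P Y0 (fun ω => X ω = x ∧ S ω = 1) =
      cexp P Y2 (fun ω => X ω = x ∧ S ω = 0) / cexp P Y0 (fun ω => X ω = x ∧ S ω = 0))
    (hne : ∀ x, 0 < pr P (fun ω => X ω = x ∧ S ω = 1) → 0 < pr P (fun ω => X ω = x ∧ S ω = 0) →
      cexp P Y2 (fun ω => X ω = x ∧ S ω = 1) ≠ 0 ∧ cexp P Y0 (fun ω => X ω = x ∧ S ω = 1) ≠ 0 ∧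
      cexp P Y2 (fun ω => X ω = x ∧ S ω = 0) ≠ 0 ∧ cexp P Y0 (fun ω => X ω = x ∧ S ω = 0) ≠ 0)
    : cexp P (fun ω => Y1 ω - Y2 ω) (fun ω => S ω = 1) =
      ∑ x ∈ univ.filter (fun x => 0 < pr P (fun ω => X ω = x ∧ S ω = 1)),
        (cexp P Y (fun ω => X ω = x ∧ S ω = 1 ∧ A ω = 1) -
          cexp P Y (fun ω => X ω = x ∧ S ω = 1 ∧ A ω = 0) * cexp P Y (fun ω => X ω = x ∧ S ω = 0 ∧ A ω = 2) /
            cexp P Y (fun ω => X ω = x ∧ S ω = 0 ∧ A ω = 0)) *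
        (pr P (fun ω => X ω = x ∧ S ω = 1) / pr P (fun ω => S ω = 1)) := by
  rw [cexp_sub', total' P hP X S Y1, total' P hP X S Y2, ← Finset.sum_sub_distrib]
  rw [← Finset.sum_filter_of_ne (p := fun x => 0 < pr P (fun ω => X ω = x ∧ S ω = 1))
    (fun x _ hne0 => by
      by_contra hnp
      have h0 : pr P (fun ω => X ω = x ∧ S ω = 1) = 0 :=
        le_antisymm (not_lt.mp hnp) (pr_nonneg' P hP _)
      simp [h0] at hne0)]
  refine Finset.sum_congr rfl fun x hx => ?_
  rw [Finset.mem_filter] at hx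
  have hx1 := hx.2
  have e1 : cexp P Y1 (fun ω => X ω = x ∧ S ω = 1) =
      cexp P Y (fun ω => X ω = x ∧ S ω = 1 ∧ A ω = 1) := by
    rw [hexch1 x hx1]
    exact cexp_congr' P fun ω hω => hcons1 ω hω.2.2
  have hx0 : 0 < pr P (fun ω => X ω = x ∧ S ω = 0) := by
    have h := pr_pos_of_cpr' P hP (hextpos x hx1)
    rwa [pr_congr' P (E := fun ω => S ω = 0 ∧ X ω = x) (F := fun ω => X ω = x ∧ S ω = 0)
      (fun ω => and_comm)] at h
  obtain ⟨hn21, hn01, hn20, hn00⟩ := hne x hx1 hx0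
  have e2 : cexp P Y2 (fun ω => X ω = x ∧ S ω = 1) =
      cexp P Y0 (fun ω => X ω = x ∧ S ω = 1) * cexp P Y2 (fun ω => X ω = x ∧ S ω = 0) /
        cexp P Y0 (fun ω => X ω = x ∧ S ω = 0) := by
    have h := htransratio x hx1 hx0
    rw [div_eq_div_iff hn01 hn00] at h
    rw [eq_div_iff hn00]
    linear_combination h
  have r10 : cexp P Y0 (fun ω => X ω = x ∧ S ω = 1) =
      cexp P Y (fun ω => X ω = x ∧ S ω = 1 ∧ A ω = 0) := by
    rw [hexch0 x hx1]
    exact cexp_congr' P fun ω hω => hcons0 ω hω.2.2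
  have r00 : cexp P Y0 (fun ω => X ω = x ∧ S ω = 0) =
      cexp P Y (fun ω => X ω = x ∧ S ω = 0 ∧ A ω = 0) := by
    rw [hexchext0 x hx0]
    exact cexp_congr' P fun ω hω => hcons0 ω hω.2.2
  have r20 : cexp P Y2 (fun ω => X ω = x ∧ S ω = 0) =
      cexp P Y (fun ω => X ω = x ∧ S ω = 0 ∧ A ω = 2) := by
    rw [hexchext2 x hx0]
    exact cexp_congr' P fun ω hω => hcons2 ω hω.2.2
  rw [e1, e2, r10, r00, r20]
  ring
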